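/- Let p ≥ 2 and s ≥ 1 be integers and let (d,r) be an arithmetical structure on CT(p,s). Suppose d_i = 1 for some 2 ≤ i ≤ p−1. Then the pair (d′,r′) obtained by smoothing at the degree-2 vertex v_i — namely r′_j = r_j for j ∈ {1,…,i−1} and for all leaves, r′_j = r_{j+1} for j ∈ {i,…,p−1}; d′_j = d_j for j ∈ {1,…,i−2} and for all leaves, d′_{i−1} = d_{i−1} − 1, d′_i = d_{i+1} − 1, and d′_j = d_{j+1} for j ∈ {i+1,…,p−1} — is a valid arithmetical structure on CT(p−1,s). -/
import Mathlib


/-- The conditions defining an arithmetical structure on the coconut tree `CT(p,s)`: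
the path vertices are `v_1, …, v_p` with labels `d i`, `r i` for `1 ≤ i ≤ p`, the
leaves are `ℓ_1, …, ℓ_s` with labels `dl j`, `rl j` for `1 ≤ j ≤ s`; `v_i` is adjacent
to `v_{i+1}` for `1 ≤ i ≤ p - 1` and every leaf is adjacent to `v_p`.  All labels are
positive, at every vertex `d_v * r_v` equals the sum of the `r`-values of its
neighbors, and the gcd of all the `r`-values is `1`. -/
def IsCTArith (p s : ℕ) (d r dl rl : ℕ → ℕ) : Prop :=
  (∀ i, 1 ≤ i → i ≤ p → 0 < d i) ∧
  (∀ i, 1 ≤ i → i ≤ p → 0 < r i) ∧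
  (∀ j, 1 ≤ j → j ≤ s → 0 < dl j) ∧
  (∀ j, 1 ≤ j → j ≤ s → 0 < rl j) ∧
  (∀ i, 1 ≤ i → i ≤ p → d i * r i =
      (if 2 ≤ i then r (i - 1) else 0) +
      (if i < p then r (i + 1) else 0) +
      (if i = p then ∑ j ∈ Finset.Icc 1 s, rl j else 0)) ∧
  (∀ j, 1 ≤ j → j ≤ s → dl j * rl j = r p) ∧
  Nat.gcd ((Finset.Icc 1 p).gcd r) ((Finset.Icc 1 s).gcd rl) = 1

/-- An arithmetical structure on `CT(p,s)` is smooth if `d_i ≥ 2` for all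
`1 ≤ i ≤ p - 1` and `d_{ℓ_j} ≥ 2` for all `1 ≤ j ≤ s`. -/
def IsCTSmooth (p s : ℕ) (d dl : ℕ → ℕ) : Prop :=
  (∀ i, 1 ≤ i → i ≤ p - 1 → 2 ≤ d i) ∧ (∀ j, 1 ≤ j → j ≤ s → 2 ≤ dl j)

/-- Smoothing an arithmetical structure on `CT(p,s)` at a degree-2
path vertex `v_i` (with `2 ≤ i ≤ p-1` and `d_i = 1`) yields a valid arithmetical
structure on `CT(p-1,s)`:
`r'_j = r_j` for `j ≤ i-1` and for all leaves, `r'_j = r_{j+1}` for `i ≤ j ≤ p-1`;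
`d'_j = d_j` for `j ≤ i-2` and for all leaves, `d'_{i-1} = d_{i-1} - 1`,
`d'_i = d_{i+1} - 1`, and `d'_j = d_{j+1}` for `i+1 ≤ j ≤ p-1`. -/
theorem ct_smoothing_inner_vertex (p s i : ℕ) (hp : 2 ≤ p) (hs : 1 ≤ s)
    (d r dl rl : ℕ → ℕ) (h : IsCTArith p s d r dl rl)
    (hi2 : 2 ≤ i) (hip : i ≤ p - 1) (hdi : d i = 1) :
    IsCTArith (p - 1) s
      (fun j => if j ≤ i - 2 then d j
                else if j = i - 1 then d (i - 1) - 1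
                else if j = i then d (i + 1) - 1
                else d (j + 1))
      (fun j => if j ≤ i - 1 then r j else r (j + 1))
      dl rl := by
  obtain ⟨hd, hr, hdl, hrl, heq, hleaf, hgcd⟩ := h
  have hip' : i + 1 ≤ p := by omega
  have eqi := heq i (by omega) (by omega)
  rw [hdi, one_mul, if_pos hi2, if_pos (show i < p by omega),
      if_neg (show ¬ i = p by omega)] at eqi
  have hri1 := hr (i+1) (by omega) (by omega)
  have hri0 := hr (i-1) (by omega) (by omega)
  have eqim := heq (i-1) (by omega) (by omega)
  rw [if_pos (show i - 1 < p by omega), if_neg (show ¬ i - 1 = p by omega),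
      show i - 1 + 1 = i by omega] at eqim
  have eqip := heq (i+1) (by omega) (by omega)
  rw [if_pos (show 2 ≤ i + 1 by omega), show i + 1 - 1 = i by omega] at eqip
  have hdim2 : 2 ≤ d (i-1) := by
    by_contra hc
    have h1 : d (i-1) = 1 := by have := hd (i-1) (by omega) (by omega); omega
    rw [h1, one_mul] at eqim
    rcases le_or_gt 2 (i-1) with h2 | h2
    · rw [if_pos h2] at eqim
      have := hr (i-1-1) (by omega) (by omega)
      omega
    · rw [if_neg (by omega)] at eqim
      omega
  have hdip2 : 2 ≤ d (i+1) := by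
    by_contra hc
    have h1 : d (i+1) = 1 := by have := hd (i+1) (by omega) (by omega); omega
    rw [h1, one_mul] at eqip
    rcases le_or_gt (i+1) (p-1) with h2 | h2
    · rw [if_pos (show i + 1 < p by omega), if_neg (show ¬ i + 1 = p by omega)] at eqip
      have := hr (i+1+1) (by omega) (by omega)
      omega
    · rw [if_neg (show ¬ i + 1 < p by omega), if_pos (show i + 1 = p by omega)] at eqip
      omega
  refine ⟨?_, ?_, hdl, hrl, ?_, ?_, ?_⟩
  · intro j hj1 hj2
    dsimp only
    split_ifs with h1 h2 h3
    · exact hd j hj1 (by omega)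
    · omega
    · omega
    · exact hd (j+1) (by omega) (by omega)
  · intro j hj1 hj2
    dsimp only
    split_ifs with h1
    · exact hr j hj1 (by omega)
    · exact hr (j+1) (by omega) (by omega)
  · intro j hj1 hj2
    simp only
    have hcase : j ≤ i - 2 ∨ j = i - 1 ∨ j = i ∨ i + 1 ≤ j := by omega
    rcases hcase with hc | hc | hc | hc
    · rw [if_pos hc, if_pos (show j ≤ i - 1 by omega), if_pos (show j - 1 ≤ i - 1 by omega),
        if_pos (show j < p - 1 by omega), if_pos (show j + 1 ≤ i - 1 by omega),
        if_neg (show ¬ j = p - 1 by omega)]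
      have e := heq j (by omega) (by omega)
      rw [if_pos (show j < p by omega), if_neg (show ¬ j = p by omega)] at e
      exact e
    · rw [hc]
      rw [if_neg (show ¬ i - 1 ≤ i - 2 by omega), if_pos rfl,
        if_pos (show i - 1 ≤ i - 1 from le_rfl), if_pos (show i - 1 - 1 ≤ i - 1 by omega),
        if_pos (show i - 1 < p - 1 by omega), show i - 1 + 1 = i by omega,
        if_neg (show ¬ i ≤ i - 1 by omega), if_neg (show ¬ i - 1 = p - 1 by omega),
        Nat.sub_one_mul]
      rcases le_or_gt 2 (i-1) with h2 | h2
      · rw [if_pos h2] at eqim ⊢; omega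
      · rw [if_neg (by omega)] at eqim ⊢; omega
    · rw [hc]
      rw [if_neg (show ¬ i ≤ i - 2 by omega), if_neg (show ¬ i = i - 1 by omega), if_pos rfl,
        if_neg (show ¬ i ≤ i - 1 by omega), if_pos (show 2 ≤ i from hi2),
        if_pos (show i - 1 ≤ i - 1 from le_rfl), Nat.sub_one_mul]
      by_cases hpc : i = p - 1
      · rw [if_neg (show ¬ i < p - 1 by omega), if_pos hpc,
          if_neg (show ¬ i + 1 < p by omega), if_pos (show i + 1 = p by omega)] at *
        omega
      · rw [if_pos (show i < p - 1 by omega), if_neg (show ¬ i + 1 ≤ i - 1 by omega),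
          if_neg hpc, if_pos (show i + 1 < p by omega),
          if_neg (show ¬ i + 1 = p by omega)] at *
        omega
    · rw [if_neg (show ¬ j ≤ i - 2 by omega), if_neg (show ¬ j = i - 1 by omega),
        if_neg (show ¬ j = i by omega), if_neg (show ¬ j ≤ i - 1 by omega),
        if_pos (show 2 ≤ j by omega), if_neg (show ¬ j - 1 ≤ i - 1 by omega),
        show j - 1 + 1 = j by omega]
      have e := heq (j+1) (by omega) (by omega)
      rw [if_pos (show 2 ≤ j + 1 by omega), show j + 1 - 1 = j by omega] at e
      by_cases hpc : j = p - 1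
      · rw [if_neg (show ¬ j < p - 1 by omega), if_pos hpc]
        rw [if_neg (show ¬ j + 1 < p by omega), if_pos (show j + 1 = p by omega)] at e
        exact e
      · rw [if_pos (show j < p - 1 by omega), if_neg (show ¬ j + 1 ≤ i - 1 by omega),
          if_neg hpc]
        rw [if_pos (show j + 1 < p by omega), if_neg (show ¬ j + 1 = p by omega)] at e
        exact e
  · intro j hj1 hj2
    simp only
    rw [if_neg (show ¬ p - 1 ≤ i - 1 by omega), show p - 1 + 1 = p by omega]
    exact hleaf j hj1 hj2
  · set G := Nat.gcd ((Finset.Icc 1 (p-1)).gcd (fun j => if j ≤ i - 1 then r j else r (j+1)))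
      ((Finset.Icc 1 s).gcd rl) with hG
    have hGA : ∀ j, 1 ≤ j → j ≤ p - 1 → G ∣ (if j ≤ i - 1 then r j else r (j+1)) := by
      intro j h1 h2
      exact dvd_trans (Nat.gcd_dvd_left _ _)
        (Finset.gcd_dvd (Finset.mem_Icc.mpr ⟨h1, h2⟩))
    have hkey : ∀ j, 1 ≤ j → j ≤ p → G ∣ r j := by
      intro j h1 h2
      have hcase : j ≤ i - 1 ∨ j = i ∨ i + 1 ≤ j := by omega
      rcases hcase with hc | hc | hc
      · have := hGA j h1 (by omega)
        rwa [if_pos hc] at this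
      · rw [hc]
        have ha := hGA (i-1) (by omega) (by omega)
        rw [if_pos (le_refl (i-1))] at ha
        have hb := hGA i (by omega) (by omega)
        rw [if_neg (show ¬ i ≤ i - 1 by omega)] at hb
        have hri : r i = r (i-1) + r (i+1) := by omega
        rw [hri]
        exact Nat.dvd_add ha hb
      · have := hGA (j-1) (by omega) (by omega)
        rwa [if_neg (show ¬ j - 1 ≤ i - 1 by omega), show j - 1 + 1 = j by omega] at this
    have h1 : G ∣ (Finset.Icc 1 p).gcd r :=
      Finset.dvd_gcd fun b hb =>
        hkey b (Finset.mem_Icc.mp hb).1 (Finset.mem_Icc.mp hb).2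
    have h2 : G ∣ (Finset.Icc 1 s).gcd rl := Nat.gcd_dvd_right _ _
    have : G ∣ 1 := hgcd ▸ Nat.dvd_gcd h1 h2
    exact Nat.dvd_one.mp this
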